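/- For every t ≥ 0, the orthogonal complement of V_{2n−1} is contained in the kernel of D_t: if ξ ⊥ V_{2n−1} then ξ·D_t ξ = 0 (equivalently D_t ξ = 0, since D_t is positive semidefinite). In particular, if the Hörmander condition fails then D_t is degenerate for every t ≥ 0. -/

import Mathlib

open Matrix MeasureTheory intervalIntegral

section AuxLemmas

set_option linter.unusedSectionVars false

variable {ι : Type*} [Fintype ι] [DecidableEq ι]

theorem aux_vecMulVec (w v x : ι → ℝ) : vecMulVec w v *ᵥ x = (v ⬝ᵥ x) • w := by
  funext i
  simp [vecMulVec_apply, mulVec, dotProduct, Finset.sum_mul, Finset.mul_sum, mul_assoc,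
    mul_comm, mul_left_comm]

theorem aux_sum_mulVec {κ : Type*} (s : Finset κ) (X : κ → Matrix ι ι ℝ) (w : ι → ℝ) :
    (∑ k ∈ s, X k) *ᵥ w = ∑ k ∈ s, X k *ᵥ w := by
  funext i
  simp [mulVec, dotProduct, Matrix.sum_apply, Finset.sum_mul]
  rw [Finset.sum_comm]

theorem aux_exp_continuous (A : Matrix ι ι ℝ) :
    Continuous fun s : ℝ => NormedSpace.exp (s • A) := by
  letI : NormedRing (Matrix ι ι ℝ) := Matrix.linftyOpNormedRing
  letI : NormedAlgebra ℝ (Matrix ι ι ℝ) := Matrix.linftyOpNormedAlgebra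
  letI : NormedAlgebra ℚ (Matrix ι ι ℝ) := NormedAlgebra.restrictScalars ℚ ℝ (Matrix ι ι ℝ)
  exact NormedSpace.exp_continuous.comp (continuous_id.smul continuous_const)

theorem aux_dot_exp (A : Matrix ι ι ℝ) (W : Submodule ℝ (ι → ℝ))
    (hAW : ∀ u ∈ W, A *ᵥ u ∈ W) (ξ : ι → ℝ) (hξ : ∀ v ∈ W, ξ ⬝ᵥ v = 0)
    (s : ℝ) (u : ι → ℝ) (hu : u ∈ W) :
    ξ ⬝ᵥ (NormedSpace.exp (s • A) *ᵥ u) = 0 := by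
  have hpow : ∀ m : ℕ, (A ^ m) *ᵥ u ∈ W := by
    intro m
    induction m with
    | zero => simpa using hu
    | succ m ih =>
      rw [pow_succ', ← Matrix.mulVec_mulVec]
      exact hAW _ ih
  letI : NormedRing (Matrix ι ι ℝ) := Matrix.linftyOpNormedRing
  letI : NormedAlgebra ℝ (Matrix ι ι ℝ) := Matrix.linftyOpNormedAlgebra
  show ξ ⬝ᵥ (NormedSpace.exp (s • A) *ᵥ u) = 0
  let L : Matrix ι ι ℝ →ₗ[ℝ] ℝ :=
    { toFun := fun X => ξ ⬝ᵥ (X *ᵥ u)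
      map_add' := fun X Y => by simp [Matrix.add_mulVec, dotProduct_add]
      map_smul' := fun c X => by simp [Matrix.smul_mulVec]
    }
  have hterm : ∀ m : ℕ, L (((m.factorial : ℝ))⁻¹ • (s • A) ^ m) = 0 := by
    intro m
    have h0 : L ((s • A) ^ m) = 0 := by
      show ξ ⬝ᵥ ((s • A) ^ m *ᵥ u) = 0
      rw [smul_pow, Matrix.smul_mulVec, dotProduct_smul, hξ _ (hpow m), smul_zero]
    rw [L.map_smul, h0, smul_zero]
  have hsum : Summable fun m : ℕ => ((m.factorial : ℝ))⁻¹ • (s • A) ^ m :=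
    NormedSpace.expSeries_summable' (𝕂 := ℝ) (s • A)
  have hmap : L (∑' m : ℕ, ((m.factorial : ℝ))⁻¹ • (s • A) ^ m)
      = ∑' m : ℕ, L (((m.factorial : ℝ))⁻¹ • (s • A) ^ m) := by
    simpa using (LinearMap.toContinuousLinearMap L).map_tsum hsum
  show L (NormedSpace.exp (s • A)) = 0
  rw [NormedSpace.exp_eq_tsum (𝕂 := ℝ), hmap]
  simp [hterm]

theorem aux_stab (F : Matrix ι ι ℝ) (V₀ : Submodule ℝ (ι → ℝ))
    (V : ℕ → Submodule ℝ (ι → ℝ))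
    (hV : ∀ j : ℕ, V j = ⨆ m ∈ Finset.range (j + 1), Submodule.map (F ^ m).mulVecLin V₀)
    (d : ℕ) (hd : Fintype.card ι = d) (hd1 : 1 ≤ d) :
    Submodule.map F.mulVecLin (V (d - 1)) ≤ V (d - 1) := by
  have hmono : Monotone V := by
    intro j j' hj
    rw [hV j, hV j']
    refine iSup_le fun m => iSup_le fun hm => ?_
    exact le_iSup₂ (f := fun m (_ : m ∈ Finset.range (j' + 1)) =>
      Submodule.map (F ^ m).mulVecLin V₀) m
      (Finset.mem_range.2 (by have := Finset.mem_range.1 hm; omega))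
  have hVle : ∀ j, V₀ ≤ V j := by
    intro j
    rw [hV j]
    have h0 : Submodule.map (F ^ 0).mulVecLin V₀ = V₀ := by
      rw [pow_zero, Matrix.mulVecLin_one, Submodule.map_id]
    calc V₀ = Submodule.map (F ^ 0).mulVecLin V₀ := h0.symm
      _ ≤ _ := le_iSup₂ (f := fun m (_ : m ∈ Finset.range (j + 1)) =>
          Submodule.map (F ^ m).mulVecLin V₀) 0 (Finset.mem_range.2 (by omega))
  have hVmem : ∀ j, Submodule.map (F ^ j).mulVecLin V₀ ≤ V j := by
    intro j
    rw [hV j]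
    exact le_iSup₂ (f := fun m (_ : m ∈ Finset.range (j + 1)) =>
      Submodule.map (F ^ m).mulVecLin V₀) j (Finset.mem_range.2 (by omega))
  have hmapF : ∀ j, Submodule.map F.mulVecLin (V j) ≤ V (j + 1) := by
    intro j
    rw [hV j, hV (j + 1)]
    rw [Submodule.map_iSup]
    refine iSup_le fun m => ?_
    rw [Submodule.map_iSup]
    refine iSup_le fun hm => ?_
    rw [← Submodule.map_comp, ← Matrix.mulVecLin_mul, ← pow_succ']
    exact le_iSup₂ (f := fun m (_ : m ∈ Finset.range (j + 2)) =>
      Submodule.map (F ^ m).mulVecLin V₀) (m + 1)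
      (Finset.mem_range.2 (by have := Finset.mem_range.1 hm; omega))
  have hsucc : ∀ j, V (j + 1) = V j ⊔ Submodule.map (F ^ (j + 1)).mulVecLin V₀ := by
    intro j
    rw [hV (j + 1), hV j]
    rw [show j + 1 + 1 = (j + 1) + 1 from rfl, Finset.range_add_one, Finset.iSup_insert]
    exact sup_comm _ _
  have hstep : ∀ j, V (j + 1) ≤ V j → V (j + 2) ≤ V (j + 1) := by
    intro j h
    rw [hsucc (j + 1)]
    refine sup_le le_rfl ?_
    have h1 : Submodule.map (F ^ (j + 1 + 1)).mulVecLin V₀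
        ≤ Submodule.map F.mulVecLin (V (j + 1)) := by
      rw [pow_succ', Matrix.mulVecLin_mul, Submodule.map_comp]
      exact Submodule.map_mono (hVmem (j + 1))
    refine h1.trans ?_
    exact (Submodule.map_mono h).trans (hmapF j)
  have hchain : ∀ j, V (j + 1) ≤ V j → ∀ i, V (j + i) ≤ V j := by
    intro j h i
    have haux : ∀ i, V (j + i + 1) ≤ V (j + i) := by
      intro i
      induction i with
      | zero => simpa using h
      | succ i ih =>
        have := hstep (j + i) ih
        rw [show j + (i + 1) + 1 = j + i + 2 by omega, show j + (i + 1) = j + i + 1 by omega]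
        exact this
    induction i with
    | zero => exact le_rfl
    | succ i ih => exact (haux i).trans ih
  suffices hgoal : V (d - 1 + 1) ≤ V (d - 1) by
    refine le_trans (hmapF (d - 1)) hgoal
  by_cases hex : ∃ j, j < d - 1 ∧ V (j + 1) ≤ V j
  · obtain ⟨j, hj, h⟩ := hex
    have := hchain j h (d - 1 + 1 - j)
    rw [show j + (d - 1 + 1 - j) = d - 1 + 1 by omega] at this
    exact this.trans (hmono (by omega))
  · push_neg at hex
    by_cases hbot : V₀ = ⊥
    · have hall : ∀ j, V j = ⊥ := by
        intro j
        refine le_antisymm ?_ bot_le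
        rw [hV j]
        refine iSup_le fun m => iSup_le fun _ => ?_
        rw [hbot, Submodule.map_bot]
      rw [hall, hall]
    · have hlt : ∀ j, j < d - 1 → V j < V (j + 1) := by
        intro j hj
        exact lt_of_le_of_ne (hmono (by omega)) fun h => (hex j hj) h.ge
      have hfr0 : 1 ≤ Module.finrank ℝ (V 0) := by
        have : V 0 ≠ ⊥ := fun h => hbot (le_antisymm (h ▸ hVle 0) bot_le)
        exact Submodule.one_le_finrank_iff.2 this
      have hfr : ∀ j, j ≤ d - 1 → j + 1 ≤ Module.finrank ℝ (V j) := by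
        intro j
        induction j with
        | zero => intro _; simpa using hfr0
        | succ j ih =>
          intro hj
          have h1 := ih (by omega)
          have h2 := Submodule.finrank_lt_finrank_of_lt (hlt j (by omega))
          omega
      have htop : V (d - 1) = ⊤ := by
        apply Submodule.eq_top_of_finrank_eq
        have hle := Submodule.finrank_le (V (d - 1))
        have hge := hfr (d - 1) le_rfl
        have hcard : Module.finrank ℝ (ι → ℝ) = d := by
          rw [Module.finrank_pi]; exact hd
        omega
      rw [htop]
      exact le_top

end AuxLemmas

/-- for every `t ≥ 0`, `V_{2n-1}^⊥ ⊆ ker D_t`: if `ξ ⊥ V_{2n-1}` then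
`ξ·D_t ξ = 0` and `D_t ξ = 0`. In particular, if the Hörmander condition
`V_{2n-1} = ℝ^{2n}` fails then `D_t` is degenerate for every `t ≥ 0`. -/
theorem perp_in_kernel_of_Dt (n K : ℕ) (hn : 1 ≤ n)
    (Ω : Matrix (Fin n ⊕ Fin n) (Fin n ⊕ Fin n) ℝ)
    (hΩ : Ω = Matrix.fromBlocks 0 (-1) 1 0)
    (Q : Matrix (Fin n ⊕ Fin n) (Fin n ⊕ Fin n) ℝ) (hQ : Q.IsSymm)
    (F : Matrix (Fin n ⊕ Fin n) (Fin n ⊕ Fin n) ℝ) (hF : F = Ω * Q)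
    (l : Fin K → (Fin n ⊕ Fin n) → ℂ)
    (M : Matrix (Fin n ⊕ Fin n) (Fin n ⊕ Fin n) ℝ)
    (hM : M = ∑ k, (vecMulVec (fun i => (l k i).re) (fun i => (l k i).re)
                  + vecMulVec (fun i => (l k i).im) (fun i => (l k i).im)))
    (N : Matrix (Fin n ⊕ Fin n) (Fin n ⊕ Fin n) ℝ)
    (hN : N = ∑ k, (vecMulVec (fun i => (l k i).re) (fun i => (l k i).im)
                  - vecMulVec (fun i => (l k i).im) (fun i => (l k i).re)))
    (A : Matrix (Fin n ⊕ Fin n) (Fin n ⊕ Fin n) ℝ) (hA : A = F + N * Ω)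
    (V₀ : Submodule ℝ ((Fin n ⊕ Fin n) → ℝ))
    (hV₀ : V₀ = Submodule.span ℝ
      (Set.range (fun k => fun i => (l k i).re) ∪ Set.range (fun k => fun i => (l k i).im)))
    (V : ℕ → Submodule ℝ ((Fin n ⊕ Fin n) → ℝ))
    (hV : ∀ j : ℕ, V j = ⨆ m ∈ Finset.range (j + 1), Submodule.map (F ^ m).mulVecLin V₀)
    (R : ℝ → Matrix (Fin n ⊕ Fin n) (Fin n ⊕ Fin n) ℝ)
    (hR : ∀ t, R t = NormedSpace.exp (t • A))
    (D : ℝ → Matrix (Fin n ⊕ Fin n) (Fin n ⊕ Fin n) ℝ)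
    (hD : ∀ t, D t = Matrix.of fun i j => ∫ s in (0:ℝ)..t, (R s * M * (R s)ᵀ) i j)
    :
    (∀ t : ℝ, 0 ≤ t → ∀ ξ : (Fin n ⊕ Fin n) → ℝ, (∀ v ∈ V (2 * n - 1), ξ ⬝ᵥ v = 0) →
      ξ ⬝ᵥ (D t).mulVec ξ = 0 ∧ (D t).mulVec ξ = 0) ∧
    (V (2 * n - 1) ≠ ⊤ →
      ∀ t : ℝ, 0 ≤ t → ∃ ξ : (Fin n ⊕ Fin n) → ℝ, ξ ≠ 0 ∧ (D t).mulVec ξ = 0) := by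
  have hcard : Fintype.card (Fin n ⊕ Fin n) = 2 * n := by
    simp [two_mul]
  have hFW : Submodule.map F.mulVecLin (V (2 * n - 1)) ≤ V (2 * n - 1) :=
    aux_stab F V₀ V hV (2 * n) hcard (by omega)
  have hFW' : ∀ u ∈ V (2 * n - 1), F *ᵥ u ∈ V (2 * n - 1) := by
    intro u hu
    exact hFW ⟨u, hu, by rw [Matrix.mulVecLin_apply]⟩
  have hV₀W : V₀ ≤ V (2 * n - 1) := by
    rw [hV (2 * n - 1)]
    have h0 : Submodule.map (F ^ 0).mulVecLin V₀ = V₀ := by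
      rw [pow_zero, Matrix.mulVecLin_one, Submodule.map_id]
    calc V₀ = Submodule.map (F ^ 0).mulVecLin V₀ := h0.symm
      _ ≤ _ := le_iSup₂ (f := fun m (_ : m ∈ Finset.range (2 * n - 1 + 1)) =>
          Submodule.map (F ^ m).mulVecLin V₀) 0 (Finset.mem_range.2 (by omega))
  have haW : ∀ k, (fun i => (l k i).re) ∈ V (2 * n - 1) := fun k =>
    hV₀W (hV₀ ▸ Submodule.subset_span (Set.mem_union_left _ ⟨k, rfl⟩))
  have hbW : ∀ k, (fun i => (l k i).im) ∈ V (2 * n - 1) := fun k =>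
    hV₀W (hV₀ ▸ Submodule.subset_span (Set.mem_union_right _ ⟨k, rfl⟩))
  have hNW : ∀ w : (Fin n ⊕ Fin n) → ℝ, N *ᵥ w ∈ V (2 * n - 1) := by
    intro w
    rw [hN, aux_sum_mulVec]
    refine Submodule.sum_mem _ fun k _ => ?_
    rw [Matrix.sub_mulVec, aux_vecMulVec, aux_vecMulVec]
    exact sub_mem (Submodule.smul_mem _ _ (haW k)) (Submodule.smul_mem _ _ (hbW k))
  have hAW : ∀ u ∈ V (2 * n - 1), A *ᵥ u ∈ V (2 * n - 1) := by
    intro u hu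
    rw [hA, Matrix.add_mulVec, ← Matrix.mulVec_mulVec]
    exact add_mem (hFW' u hu) (hNW _)
  have hRc : Continuous R := by
    have h := aux_exp_continuous A
    rwa [← funext hR] at h
  have hcont : ∀ i j, Continuous fun s => (R s * M * (R s)ᵀ) i j := fun i j =>
    ((hRc.matrix_mul continuous_const).matrix_mul hRc.matrix_transpose).matrix_elem i j
  have key : ∀ t : ℝ, ∀ ξ : (Fin n ⊕ Fin n) → ℝ, (∀ v ∈ V (2 * n - 1), ξ ⬝ᵥ v = 0) →
      ξ ⬝ᵥ (D t).mulVec ξ = 0 ∧ (D t).mulVec ξ = 0 := by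
    intro t ξ hξ
    have hkey : ∀ (s : ℝ) v, v ∈ V (2 * n - 1) → ξ ⬝ᵥ (R s *ᵥ v) = 0 := by
      intro s v hv
      rw [hR s]
      exact aux_dot_exp A (V (2 * n - 1)) hAW ξ hξ s v hv
    have hvdot : ∀ (s : ℝ) v, v ∈ V (2 * n - 1) → v ⬝ᵥ ((R s)ᵀ *ᵥ ξ) = 0 := by
      intro s v hv
      rw [Matrix.dotProduct_mulVec, Matrix.vecMul_transpose, dotProduct_comm]
      exact hkey s v hv
    have hpt : ∀ s : ℝ, (R s * M * (R s)ᵀ) *ᵥ ξ = 0 := by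
      intro s
      have hMv : M *ᵥ ((R s)ᵀ *ᵥ ξ) = 0 := by
        rw [hM, aux_sum_mulVec]
        refine Finset.sum_eq_zero fun k _ => ?_
        rw [Matrix.add_mulVec, aux_vecMulVec, aux_vecMulVec,
          hvdot s _ (haW k), hvdot s _ (hbW k)]
        simp
      calc (R s * M * (R s)ᵀ) *ᵥ ξ = R s *ᵥ (M *ᵥ ((R s)ᵀ *ᵥ ξ)) := by
            rw [Matrix.mulVec_mulVec, Matrix.mulVec_mulVec]
        _ = 0 := by rw [hMv, Matrix.mulVec_zero]
    have hDmul : (D t).mulVec ξ = 0 := by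
      funext i
      have h1 : (D t).mulVec ξ i = ∑ j, (D t) i j * ξ j := by
        simp [Matrix.mulVec, dotProduct]
      have h3 : ∀ s : ℝ, ∑ j, (R s * M * (R s)ᵀ) i j * ξ j = 0 := by
        intro s
        have := congrFun (hpt s) i
        simpa [Matrix.mulVec, dotProduct] using this
      rw [h1, hD t]
      simp only [Matrix.of_apply]
      rw [Finset.sum_congr rfl fun j _ =>
        (intervalIntegral.integral_mul_const (ξ j) fun s => (R s * M * (R s)ᵀ) i j).symm]
      rw [← intervalIntegral.integral_finset_sum (f := fun j s => (R s * M * (R s)ᵀ) i j * ξ j)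
        (fun j _ => (((hcont i j).mul continuous_const).intervalIntegrable _ _ :
          IntervalIntegrable (fun s => (R s * M * (R s)ᵀ) i j * ξ j) volume 0 t))]
      simp only [h3, intervalIntegral.integral_zero, Pi.zero_apply]
    exact ⟨by rw [hDmul, dotProduct_zero], hDmul⟩
  refine ⟨fun t _ ξ hξ => key t ξ hξ, ?_⟩
  intro hne t ht
  let e := WithLp.linearEquiv 2 ℝ ((Fin n ⊕ Fin n) → ℝ)
  let W' : Submodule ℝ (EuclideanSpace ℝ (Fin n ⊕ Fin n)) :=
    (V (2 * n - 1)).comap e.toLinearMap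
  have hW' : W' ≠ ⊤ := by
    intro h
    apply hne
    refine Submodule.eq_top_iff'.2 fun v => ?_
    have hm : e.symm v ∈ W' := h ▸ Submodule.mem_top
    simpa [W', Submodule.mem_comap] using hm
  have hWbot : W'ᗮ ≠ ⊥ := fun h => hW' (Submodule.orthogonal_eq_bot_iff.1 h)
  obtain ⟨ξ', hξ'mem, hξ'ne⟩ := (Submodule.ne_bot_iff _).1 hWbot
  refine ⟨e ξ', ?_, ?_⟩
  · intro h
    exact hξ'ne (by simpa using congrArg e.symm h)
  · refine (key t (e ξ') ?_).2
    intro v hv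
    have hmem : e.symm v ∈ W' := by
      simpa [W', Submodule.mem_comap] using hv
    have hip : (inner ℝ (e.symm v) ξ' : ℝ) = 0 :=
      (Submodule.mem_orthogonal W' ξ').1 hξ'mem _ hmem
    have hip2 : (∑ i, v i * ξ' i) = 0 := by
      simpa [e, PiLp.inner_apply, RCLike.inner_apply, starRingEnd_apply, mul_comm] using hip
    show (∑ i, ξ' i * v i) = 0
    calc (∑ i, ξ' i * v i) = ∑ i, v i * ξ' i := by
          simp [mul_comm]
      _ = 0 := hip2
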